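/- Let λ̲ < λ̄ be real numbers and let S = {s ∈ ℂ : -λ̄ < Re(s) < -λ̲} be the open vertical strip. Let G : S → ℂ be analytic and bounded. Then for every real c with c < sup_{s∈S}|G(s)| there exists an analytic function U : S → ℂ with 0 < ‖U‖₂ < ∞, where ‖U‖₂ := sup_{λ∈(λ̲,λ̄)} ((1/2π)∫_ℝ |U(-λ+iω)|² dω)^{1/2}, such that ‖G·U‖₂ > c · ‖U‖₂. -/

import Mathlib

open MeasureTheory

/-- The open vertical strip `{s : ℂ | -λ̄ < Re s < -λ̲}`. -/
def strip (llo lhi : ℝ) : Set ℂ := {s : ℂ | -lhi < s.re ∧ s.re < -llo}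

/-- The `H₂` norm on the strip, valued in `ℝ≥0∞`:
`sup_{λ ∈ (λ̲,λ̄)} ((1/2π)∫ |f(-λ+iω)|² dω)^{1/2}`. -/
noncomputable def H2Norm (llo lhi : ℝ) (f : ℂ → ℂ) : ENNReal :=
  ⨆ l ∈ Set.Ioo llo lhi,
    (ENNReal.ofReal (1 / (2 * Real.pi)) *
      ∫⁻ ω : ℝ, (‖f (-l + ω * Complex.I)‖₊ : ENNReal) ^ (2 : ℝ)) ^ (1 / 2 : ℝ)

open Set
open scoped ENNReal NNReal

lemma ofReal_norm_eq_coe_nnnorm {E : Type*} [SeminormedAddGroup E] (a : E) :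
    ENNReal.ofReal ‖a‖ = ((‖a‖₊ : ℝ≥0) : ℝ≥0∞) := ofReal_norm a

lemma circle_mean (f : ℂ → ℂ) (s₀ : ℂ) (ρ : ℝ) (hρ : 0 < ρ)
    (hf : DiffContOnCl ℂ f (Metric.ball s₀ ρ)) :
    2 * Real.pi * ‖f s₀‖ ≤ ∫ θ in (0:ℝ)..(2*Real.pi), ‖f (circleMap s₀ ρ θ)‖ := by
  have h := hf.two_pi_i_inv_smul_circleIntegral_sub_inv_smul (Metric.mem_ball_self hρ)
  have hne : ∀ θ : ℝ, circleMap 0 ρ θ ≠ 0 := by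
    intro θ
    simpa using circleMap_ne_center (c := (0:ℂ)) (R := ρ) hρ.ne' (θ := θ)
  have hint : (∮ z in C(s₀, ρ), (z - s₀)⁻¹ • f z)
      = Complex.I * ∫ θ in (0:ℝ)..(2*Real.pi), f (circleMap s₀ ρ θ) := by
    rw [circleIntegral, ← intervalIntegral.integral_const_mul]
    refine intervalIntegral.integral_congr fun θ _ => ?_
    rw [deriv_circleMap, circleMap_sub_center, smul_eq_mul, smul_eq_mul]
    field_simp [hne θ]
  rw [hint, smul_eq_mul] at h
  have h2 : f s₀ = (2 * Real.pi : ℂ)⁻¹ * ∫ θ in (0:ℝ)..(2*Real.pi), f (circleMap s₀ ρ θ) := by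
    rw [← h]
    have : ((2 * Real.pi * Complex.I : ℂ))⁻¹ * Complex.I = (2 * Real.pi : ℂ)⁻¹ := by
      field_simp [Complex.I_ne_zero, Real.pi_ne_zero]
    push_cast
    rw [← mul_assoc, this]
  have h3 : ‖f s₀‖ ≤ (2 * Real.pi)⁻¹ * ∫ θ in (0:ℝ)..(2*Real.pi), ‖f (circleMap s₀ ρ θ)‖ := by
    rw [h2, norm_mul]
    have hn : ‖((2 * Real.pi : ℂ))⁻¹‖ = (2 * Real.pi)⁻¹ := by
      rw [norm_inv]
      norm_num [Complex.norm_real, abs_of_pos Real.pi_pos]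
    rw [hn]
    gcongr
    exact intervalIntegral.norm_integral_le_integral_norm (by positivity)
  have hpi : (0:ℝ) < 2 * Real.pi := by positivity
  calc 2 * Real.pi * ‖f s₀‖ ≤ 2 * Real.pi * ((2 * Real.pi)⁻¹ * ∫ θ in (0:ℝ)..(2*Real.pi), ‖f (circleMap s₀ ρ θ)‖) := by
        gcongr
    _ = _ := by field_simp


set_option maxHeartbeats 1000000 in
lemma H2Norm_lower (llo lhi : ℝ) (f : ℂ → ℂ) (hf : DifferentiableOn ℂ f (strip llo lhi))
    (s₀ : ℂ) (r : ℝ) (hr : 0 < r) (h1 : llo < -s₀.re - r) (h2 : -s₀.re + r < lhi) :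
    ENNReal.ofReal (Real.sqrt (Real.pi * r / 32) * ‖f s₀‖) ≤ H2Norm llo lhi f := by
  rcases eq_or_lt_of_le (norm_nonneg (f s₀)) with h0 | hpos
  · simp [← h0]
  set a := s₀.re with ha
  set b := s₀.im with hb
  set c'' := ‖f s₀‖ with hc''
  -- membership of the rectangle in the strip
  have hRect : ∀ x y : ℝ, |x| ≤ r → |y| ≤ r → (s₀ + (x + y * Complex.I)) ∈ strip llo lhi := by
    intro x y hx hy
    have hx1 := abs_le.1 hx
    constructor
    · simp only [Complex.add_re, Complex.add_re, Complex.ofReal_re, Complex.mul_re,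
        Complex.I_re, Complex.I_im, Complex.ofReal_im]
      simp
      nlinarith [hx1.1, hx1.2]
    · simp only [Complex.add_re]
      simp
      nlinarith [hx1.1, hx1.2]
  have hcont : ContinuousOn f (strip llo lhi) := hf.continuousOn
  -- a bound on the closed rectangle
  obtain ⟨C, hC⟩ : ∃ C, ∀ x y : ℝ, |x| ≤ r → |y| ≤ r → ‖f (s₀ + (x + y * Complex.I))‖ ≤ C := by
    have hcomp : IsCompact ((fun p : ℝ × ℝ => s₀ + (p.1 + p.2 * Complex.I)) ''
        (Icc (-r) r ×ˢ Icc (-r) r)) := by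
      apply IsCompact.image (IsCompact.prod isCompact_Icc isCompact_Icc)
      continuity
    have hsub : ((fun p : ℝ × ℝ => s₀ + (p.1 + p.2 * Complex.I)) ''
        (Icc (-r) r ×ˢ Icc (-r) r)) ⊆ strip llo lhi := by
      rintro z ⟨⟨x, y⟩, ⟨hx, hy⟩, rfl⟩
      exact hRect x y (abs_le.2 ⟨hx.1, hx.2⟩) (abs_le.2 ⟨hy.1, hy.2⟩)
    obtain ⟨C, hC⟩ := hcomp.exists_bound_of_continuousOn (hcont.mono hsub)
    exact ⟨C, fun x y hx hy => hC _ ⟨(x, y), ⟨⟨(abs_le.1 hx).1, (abs_le.1 hx).2⟩,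
        ⟨(abs_le.1 hy).1, (abs_le.1 hy).2⟩⟩, rfl⟩⟩
  set g2 : ℝ × ℝ → ENNReal := fun q => (‖f (s₀ + (q.1 + q.2 * Complex.I))‖₊ : ENNReal) with hg2def
  -- Step (i) : circle lower bound, lintegral form
  have key : ∀ ρ ∈ Ioo (0:ℝ) r,
      ENNReal.ofReal (2 * Real.pi * c'') ≤
        ∫⁻ θ in Ioo (-Real.pi) Real.pi, g2 (ρ * Real.cos θ, ρ * Real.sin θ) := by
    intro ρ hρ
    have hball : Metric.closedBall s₀ ρ ⊆ strip llo lhi := by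
      intro z hz
      have h1' : |z.re - a| ≤ ρ := by
        have := Complex.abs_re_le_norm (z - s₀)
        simp only [Complex.sub_re] at this
        calc |z.re - a| ≤ ‖z - s₀‖ := this
          _ ≤ ρ := by rwa [Metric.mem_closedBall, Complex.dist_eq] at hz
      have h2' : |z.im - b| ≤ ρ := by
        have := Complex.abs_im_le_norm (z - s₀)
        simp only [Complex.sub_im] at this
        calc |z.im - b| ≤ ‖z - s₀‖ := this
          _ ≤ ρ := by rwa [Metric.mem_closedBall, Complex.dist_eq] at hz
      have hz' : z = s₀ + ((↑(z.re - a) : ℂ) + (↑(z.im - b) : ℂ) * Complex.I) := by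
        apply Complex.ext <;> simp [ha, hb]
      rw [hz']
      exact hRect _ _ (h1'.trans hρ.2.le) (h2'.trans hρ.2.le)
    have hdc : DiffContOnCl ℂ f (Metric.ball s₀ ρ) := by
      apply DifferentiableOn.diffContOnCl
      apply hf.mono
      exact (Metric.closure_ball_subset_closedBall).trans hball
    have hcirc := circle_mean f s₀ ρ hρ.1 hdc
    -- shift the interval integral
    have hper : Function.Periodic (fun θ => ‖f (circleMap s₀ ρ θ)‖) (2 * Real.pi) := by
      intro θ; simp [periodic_circleMap s₀ ρ θ]
    have hshift : ∫ θ in (0:ℝ)..(2*Real.pi), ‖f (circleMap s₀ ρ θ)‖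
        = ∫ θ in (-Real.pi)..Real.pi, ‖f (circleMap s₀ ρ θ)‖ := by
      have := hper.intervalIntegral_add_eq 0 (-Real.pi)
      simp only [zero_add] at this
      rw [this]
      congr 1
      ring
    rw [hshift, intervalIntegral.integral_of_le (by linarith [Real.pi_pos])] at hcirc
    calc ENNReal.ofReal (2 * Real.pi * c'')
        ≤ ENNReal.ofReal (∫ θ in Ioc (-Real.pi) Real.pi, ‖f (circleMap s₀ ρ θ)‖) :=
          ENNReal.ofReal_le_ofReal hcirc
      _ ≤ ↑‖∫ θ in Ioc (-Real.pi) Real.pi, ‖f (circleMap s₀ ρ θ)‖‖₊ := Real.ofReal_le_enorm _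
      _ ≤ ∫⁻ θ in Ioc (-Real.pi) Real.pi, ↑‖(‖f (circleMap s₀ ρ θ)‖)‖₊ :=
          enorm_integral_le_lintegral_enorm _
      _ = ∫⁻ θ in Ioo (-Real.pi) Real.pi, g2 (ρ * Real.cos θ, ρ * Real.sin θ) := by
          rw [← setLIntegral_congr Ioo_ae_eq_Ioc]
          apply setLIntegral_congr_fun measurableSet_Ioo
          intro θ _
          have : circleMap s₀ ρ θ = s₀ + (↑(ρ * Real.cos θ) + ↑(ρ * Real.sin θ) * Complex.I) := by
            simp only [circleMap, Complex.exp_mul_I]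
            push_cast
            ring
          beta_reduce
          rw [nnnorm_norm, hg2def]
          simp only [this]
  -- Step (ii): change of variables to polar coordinates
  set S : Set (ℝ × ℝ) := Ioo (0:ℝ) r ×ˢ Ioo (-Real.pi) Real.pi with hSdef
  have hS_meas : MeasurableSet S := measurableSet_Ioo.prod measurableSet_Ioo
  set Q : Set (ℝ × ℝ) := Ioo (-r) r ×ˢ Ioo (-r) r with hQdef
  have hQ_meas : MeasurableSet Q := measurableSet_Ioo.prod measurableSet_Ioo
  have hψcont : Continuous (fun q : ℝ × ℝ => s₀ + (↑q.1 + ↑q.2 * Complex.I)) := by continuity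
  have hg2cont : ∀ (A : Set (ℝ × ℝ)), (∀ q ∈ A, |q.1| ≤ r ∧ |q.2| ≤ r) → ContinuousOn g2 A := by
    intro A hA
    have h1 : ContinuousOn (fun q : ℝ × ℝ => f (s₀ + (↑q.1 + ↑q.2 * Complex.I))) A := by
      apply hcont.comp hψcont.continuousOn
      intro q hq
      exact hRect _ _ (hA q hq).1 (hA q hq).2
    exact (ENNReal.continuous_coe.comp continuous_nnnorm).comp_continuousOn h1
  have hg2m : AEMeasurable g2 (volume.restrict Q) := by
    apply ContinuousOn.aemeasurable _ hQ_meas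
    exact hg2cont Q (fun q hq => ⟨(abs_lt.2 ⟨hq.1.1, hq.1.2⟩).le, (abs_lt.2 ⟨hq.2.1, hq.2.2⟩).le⟩)
  have hder : ∀ p ∈ S, HasFDerivWithinAt (↑polarCoord.symm)
      (LinearMap.toContinuousLinearMap ((Matrix.toLin (Module.Basis.finTwoProd ℝ) (Module.Basis.finTwoProd ℝ))
        !![Real.cos p.2, -p.1 * Real.sin p.2; Real.sin p.2, p.1 * Real.cos p.2])) S p :=
    fun p _ => (hasFDerivAt_polarCoord_symm p).hasFDerivWithinAt
  have hinj : Set.InjOn (↑polarCoord.symm) S := by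
    apply polarCoord.symm.injOn.mono
    rw [OpenPartialHomeomorph.symm_source, polarCoord_target]
    exact Set.prod_mono Ioo_subset_Ioi_self (subset_refl _)
  have hchg := lintegral_image_eq_lintegral_abs_det_fderiv_mul volume hS_meas hder hinj g2
  have hsymm_apply : ∀ p : ℝ × ℝ, (polarCoord.symm p : ℝ × ℝ)
      = (p.1 * Real.cos p.2, p.1 * Real.sin p.2) := fun p => rfl
  have himg : (↑polarCoord.symm) '' S ⊆ Q := by
    rintro q ⟨p, hp, rfl⟩
    rw [hsymm_apply]
    have h0p : 0 < p.1 := hp.1.1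
    have h1p : p.1 < r := hp.1.2
    constructor
    · have : |p.1 * Real.cos p.2| < r := by
        rw [abs_mul, abs_of_pos h0p]
        calc p.1 * |Real.cos p.2| ≤ p.1 * 1 := by
              exact mul_le_mul_of_nonneg_left (Real.abs_cos_le_one p.2) h0p.le
          _ < r := by linarith
      exact ⟨(abs_lt.1 this).1, (abs_lt.1 this).2⟩
    · have : |p.1 * Real.sin p.2| < r := by
        rw [abs_mul, abs_of_pos h0p]
        calc p.1 * |Real.sin p.2| ≤ p.1 * 1 := by
              exact mul_le_mul_of_nonneg_left (Real.abs_sin_le_one p.2) h0p.le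
          _ < r := by linarith
      exact ⟨(abs_lt.1 this).1, (abs_lt.1 this).2⟩
  set I₂ := ∫⁻ q in Q, g2 q with hI₂def
  set I₃ := ∫⁻ q in Q, g2 q ^ (2:ℝ) with hI₃def
  -- chain1 : lower bound on I₂
  have chain1 : ENNReal.ofReal (Real.pi * r^2 * c'') ≤ I₂ := by
    have e1 : ∫⁻ p in S, ENNReal.ofReal
        |(LinearMap.toContinuousLinearMap ((Matrix.toLin (Module.Basis.finTwoProd ℝ) (Module.Basis.finTwoProd ℝ))
        !![Real.cos p.2, -p.1 * Real.sin p.2; Real.sin p.2, p.1 * Real.cos p.2])).det|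
        * g2 (polarCoord.symm p)
        = ∫⁻ p in S, ENNReal.ofReal p.1 * g2 (p.1 * Real.cos p.2, p.1 * Real.sin p.2) := by
      apply setLIntegral_congr_fun hS_meas
      intro p hp
      beta_reduce
      rw [hsymm_apply]
      congr 1
      congr 1
      have hdet : (LinearMap.toContinuousLinearMap ((Matrix.toLin (Module.Basis.finTwoProd ℝ)
          (Module.Basis.finTwoProd ℝ))
          !![Real.cos p.2, -p.1 * Real.sin p.2; Real.sin p.2, p.1 * Real.cos p.2])).det = p.1 := by
        simp only [LinearMap.det_toContinuousLinearMap, LinearMap.det_toLin,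
          Matrix.det_fin_two_of]
        linear_combination p.1 * Real.sin_sq_add_cos_sq p.2
      rw [hdet, abs_of_pos hp.1.1]
    have hrestrS : volume.restrict S
        = (volume.restrict (Ioo (0:ℝ) r)).prod (volume.restrict (Ioo (-Real.pi) Real.pi)) := by
      rw [Measure.prod_restrict, ← Measure.volume_eq_prod]
    have hFm : AEMeasurable (fun p : ℝ × ℝ =>
        ENNReal.ofReal p.1 * g2 (p.1 * Real.cos p.2, p.1 * Real.sin p.2)) (volume.restrict S) := by
      refine AEMeasurable.mul (f := fun p : ℝ × ℝ => ENNReal.ofReal p.1)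
        (g := fun p : ℝ × ℝ => g2 (p.1 * Real.cos p.2, p.1 * Real.sin p.2)) ?_ ?_
      · exact (measurable_fst.ennreal_ofReal).aemeasurable
      · apply ContinuousOn.aemeasurable _ hS_meas
        have hmaps : MapsTo (fun p : ℝ × ℝ => (p.1 * Real.cos p.2, p.1 * Real.sin p.2)) S
            (Icc (-r) r ×ˢ Icc (-r) r) := by
          intro p hp
          have h0p : 0 < p.1 := hp.1.1
          have h1p : p.1 < r := hp.1.2
          have hcos : |p.1 * Real.cos p.2| ≤ r := by
            rw [abs_mul, abs_of_pos h0p]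
            calc p.1 * |Real.cos p.2| ≤ p.1 * 1 :=
                mul_le_mul_of_nonneg_left (Real.abs_cos_le_one p.2) h0p.le
              _ ≤ r := by linarith
          have hsin : |p.1 * Real.sin p.2| ≤ r := by
            rw [abs_mul, abs_of_pos h0p]
            calc p.1 * |Real.sin p.2| ≤ p.1 * 1 :=
                mul_le_mul_of_nonneg_left (Real.abs_sin_le_one p.2) h0p.le
              _ ≤ r := by linarith
          exact ⟨⟨(abs_le.1 hcos).1, (abs_le.1 hcos).2⟩, ⟨(abs_le.1 hsin).1, (abs_le.1 hsin).2⟩⟩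
        have hg2on : ContinuousOn g2 (Icc (-r) r ×ˢ Icc (-r) r) :=
          hg2cont _ (fun q hq => ⟨abs_le.2 ⟨hq.1.1, hq.1.2⟩, abs_le.2 ⟨hq.2.1, hq.2.2⟩⟩)
        exact hg2on.comp (Continuous.continuousOn
          ((continuous_fst.mul (Real.continuous_cos.comp continuous_snd)).prodMk
            (continuous_fst.mul (Real.continuous_sin.comp continuous_snd)))) hmaps
    have e2 : ∫⁻ p in S, ENNReal.ofReal p.1 * g2 (p.1 * Real.cos p.2, p.1 * Real.sin p.2)
        = ∫⁻ ρ in Ioo (0:ℝ) r, ∫⁻ θ in Ioo (-Real.pi) Real.pi,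
            ENNReal.ofReal ρ * g2 (ρ * Real.cos θ, ρ * Real.sin θ) := by
      rw [hrestrS] at hFm ⊢
      exact lintegral_prod _ hFm
    have e3 : ∫⁻ ρ in Ioo (0:ℝ) r, ENNReal.ofReal ρ * ENNReal.ofReal (2 * Real.pi * c'')
        ≤ ∫⁻ ρ in Ioo (0:ℝ) r, ∫⁻ θ in Ioo (-Real.pi) Real.pi,
            ENNReal.ofReal ρ * g2 (ρ * Real.cos θ, ρ * Real.sin θ) := by
      apply lintegral_mono_ae
      rw [ae_restrict_iff' measurableSet_Ioo]
      apply Filter.Eventually.of_forall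
      intro ρ hρ
      rw [lintegral_const_mul' _ _ ENNReal.ofReal_ne_top]
      exact mul_le_mul_right (key ρ hρ) _
    have e4 : ENNReal.ofReal (r^2/2) ≤ ∫⁻ ρ in Ioo (0:ℝ) r, ENNReal.ofReal ρ := by
      have hval : ∫ ρ in Ioo (0:ℝ) r, ρ = r^2/2 := by
        rw [setIntegral_congr_set Ioo_ae_eq_Ioc, ← intervalIntegral.integral_of_le hr.le,
          integral_id]
        ring
      calc ENNReal.ofReal (r^2/2) = ENNReal.ofReal (∫ ρ in Ioo (0:ℝ) r, ρ) := by rw [hval]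
        _ ≤ ↑‖∫ ρ in Ioo (0:ℝ) r, ρ‖₊ := Real.ofReal_le_enorm _
        _ ≤ ∫⁻ ρ in Ioo (0:ℝ) r, ↑‖ρ‖₊ := enorm_integral_le_lintegral_enorm _
        _ = ∫⁻ ρ in Ioo (0:ℝ) r, ENNReal.ofReal ρ := by
            apply setLIntegral_congr_fun measurableSet_Ioo
            exact fun ρ hρ => Real.enorm_eq_ofReal hρ.1.le
    calc ENNReal.ofReal (Real.pi * r^2 * c'')
        = ENNReal.ofReal (2*Real.pi*c'') * ENNReal.ofReal (r^2/2) := by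
          rw [← ENNReal.ofReal_mul (by positivity)]
          congr 1
          ring
      _ ≤ ENNReal.ofReal (2*Real.pi*c'') * ∫⁻ ρ in Ioo (0:ℝ) r, ENNReal.ofReal ρ :=
          mul_le_mul_right e4 _
      _ = ∫⁻ ρ in Ioo (0:ℝ) r, ENNReal.ofReal ρ * ENNReal.ofReal (2*Real.pi*c'') := by
          rw [← lintegral_const_mul' _ _ ENNReal.ofReal_ne_top]
          congr 1
          funext ρ
          rw [mul_comm]
      _ ≤ ∫⁻ ρ in Ioo (0:ℝ) r, ∫⁻ θ in Ioo (-Real.pi) Real.pi,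
            ENNReal.ofReal ρ * g2 (ρ * Real.cos θ, ρ * Real.sin θ) := e3
      _ = ∫⁻ p in S, ENNReal.ofReal p.1 * g2 (p.1 * Real.cos p.2, p.1 * Real.sin p.2) := e2.symm
      _ = ∫⁻ p in S, ENNReal.ofReal
            |(LinearMap.toContinuousLinearMap ((Matrix.toLin (Module.Basis.finTwoProd ℝ)
              (Module.Basis.finTwoProd ℝ))
              !![Real.cos p.2, -p.1 * Real.sin p.2; Real.sin p.2, p.1 * Real.cos p.2])).det|
            * g2 (polarCoord.symm p) := e1.symm
      _ = ∫⁻ q in (↑polarCoord.symm '' S), g2 q := hchg.symm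
      _ ≤ I₂ := lintegral_mono_set himg
  -- chain2 : Cauchy-Schwarz
  have h2r0 : (ENNReal.ofReal (2*r)) ≠ 0 := (ENNReal.ofReal_pos.mpr (by positivity)).ne'
  have hconj : Real.HolderConjugate 2 2 := by constructor <;> norm_num
  have hvolQ : volume Q = ENNReal.ofReal (2*r) * ENNReal.ofReal (2*r) := by
    rw [hQdef, Measure.volume_eq_prod, Measure.prod_prod, Real.volume_Ioo]
    rw [show r - -r = 2*r by ring]
  have hvolQhalf : (volume Q) ^ (1/2:ℝ) = ENNReal.ofReal (2*r) := by
    rw [hvolQ, ← ENNReal.ofReal_mul (by positivity),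
      ENNReal.ofReal_rpow_of_nonneg (by positivity) (by norm_num), ← Real.sqrt_eq_rpow,
      show (2*r)*(2*r) = (2*r)^2 by ring, Real.sqrt_sq (by positivity)]
  have chain2 : I₂ ≤ I₃ ^ (1/2:ℝ) * ENNReal.ofReal (2*r) := by
    have hcs := ENNReal.lintegral_mul_le_Lp_mul_Lq (volume.restrict Q) hconj hg2m
      (aemeasurable_const (b := (1:ENNReal)))
    simp only [Pi.mul_apply, mul_one, ENNReal.one_rpow, lintegral_one,
      Measure.restrict_apply_univ] at hcs
    rw [hvolQhalf] at hcs
    exact hcs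
  -- chain3 : lower bound on I₃
  have chain3 : ENNReal.ofReal (Real.pi^2*r^2*c''^2/4) ≤ I₃ := by
    have h12 : ENNReal.ofReal (Real.pi * r^2 * c'') ≤ I₃ ^ (1/2:ℝ) * ENNReal.ofReal (2*r) :=
      chain1.trans chain2
    have hdiv : ENNReal.ofReal (Real.pi * r * c'' / 2) ≤ I₃ ^ (1/2:ℝ) := by
      have := (ENNReal.div_le_iff_le_mul (Or.inl h2r0)
        (Or.inl ENNReal.ofReal_ne_top)).mpr h12
      rw [← ENNReal.ofReal_div_of_pos (by positivity : (0:ℝ) < 2*r)] at this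
      rwa [show Real.pi * r^2 * c'' / (2*r) = Real.pi * r * c'' / 2 by
          field_simp] at this
    have h2 := ENNReal.rpow_le_rpow hdiv (by norm_num : (0:ℝ) ≤ 2)
    rw [← ENNReal.rpow_mul I₃, show (1/2:ℝ)*2 = 1 by norm_num, ENNReal.rpow_one,
      ENNReal.ofReal_rpow_of_nonneg (by positivity) (by norm_num)] at h2
    have heq : (Real.pi * r * c'' / 2) ^ (2:ℝ) = Real.pi^2*r^2*c''^2/4 := by
      rw [show (2:ℝ) = ((2:ℕ):ℝ) by norm_num, Real.rpow_natCast]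
      ring
    rwa [heq] at h2
  -- finiteness of I₃
  have hI₃top : I₃ ≠ ⊤ := by
    have hb : ∀ q ∈ Q, g2 q ^ (2:ℝ) ≤ ENNReal.ofReal C ^ (2:ℝ) := by
      intro q hq
      apply ENNReal.rpow_le_rpow _ (by norm_num)
      rw [hg2def]
      calc ((‖f (s₀ + (↑q.1 + ↑q.2 * Complex.I))‖₊ : ℝ≥0∞))
          = ENNReal.ofReal ‖f (s₀ + (↑q.1 + ↑q.2 * Complex.I))‖ :=
            (ofReal_norm_eq_coe_nnnorm _).symm
        _ ≤ ENNReal.ofReal C := ENNReal.ofReal_le_ofReal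
            (hC _ _ (abs_lt.2 ⟨hq.1.1, hq.1.2⟩).le (abs_lt.2 ⟨hq.2.1, hq.2.2⟩).le)
    have : I₃ ≤ ENNReal.ofReal C ^ (2:ℝ) * volume Q := by
      calc I₃ ≤ ∫⁻ _q in Q, ENNReal.ofReal C ^ (2:ℝ) := setLIntegral_mono measurable_const hb
        _ = ENNReal.ofReal C ^ (2:ℝ) * volume Q := by rw [setLIntegral_const]
    apply ne_top_of_le_ne_top _ this
    exact (ENNReal.mul_lt_top
      (ENNReal.rpow_lt_top_of_nonneg (by norm_num) ENNReal.ofReal_ne_top)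
      (by rw [hvolQ]; exact ENNReal.mul_lt_top ENNReal.ofReal_lt_top ENNReal.ofReal_lt_top)).ne
  have hI₃0 : I₃ ≠ 0 := by
    intro h0
    rw [h0, le_zero_iff, ENNReal.ofReal_eq_zero] at chain3
    have : (0:ℝ) < Real.pi^2*r^2*c''^2/4 := by positivity
    linarith
  -- Tonelli for I₃
  have hrestrQ : volume.restrict Q
      = (volume.restrict (Ioo (-r) r)).prod (volume.restrict (Ioo (-r) r)) := by
    rw [Measure.prod_restrict, ← Measure.volume_eq_prod]
  have hm2 : AEMeasurable (fun q : ℝ × ℝ => g2 q ^ (2:ℝ)) (volume.restrict Q) :=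
    hg2m.pow_const (2:ℝ)
  have hsplit : I₃ = ∫⁻ x in Ioo (-r) r, ∫⁻ y in Ioo (-r) r, g2 (x,y) ^ (2:ℝ) := by
    rw [hrestrQ] at hm2
    rw [hI₃def, hrestrQ]
    exact lintegral_prod _ hm2
  -- slicing
  obtain ⟨x, hx, hHx⟩ : ∃ x ∈ Ioo (-r) r,
      I₃ / 2 / ENNReal.ofReal (2*r) ≤ ∫⁻ y in Ioo (-r) r, g2 (x,y) ^ (2:ℝ) := by
    by_contra hcon
    push_neg at hcon
    have hle : I₃ ≤ I₃ / 2 := by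
      calc I₃ = ∫⁻ x in Ioo (-r) r, ∫⁻ y in Ioo (-r) r, g2 (x,y) ^ (2:ℝ) := hsplit
        _ ≤ ∫⁻ _x in Ioo (-r) r, I₃ / 2 / ENNReal.ofReal (2*r) :=
            setLIntegral_mono measurable_const (fun x hx => (hcon x hx).le)
        _ = I₃ / 2 / ENNReal.ofReal (2*r) * volume (Ioo (-r) r) := setLIntegral_const _ _
        _ = I₃ / 2 := by
            rw [Real.volume_Ioo, show r - -r = 2*r by ring]
            exact ENNReal.div_mul_cancel h2r0 ENNReal.ofReal_ne_top
    exact absurd hle (ENNReal.half_lt_self hI₃0 hI₃top).not_ge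
  have hT : ENNReal.ofReal (Real.pi^2*r*c''^2/16) ≤ I₃ / 2 / ENNReal.ofReal (2*r) := by
    calc ENNReal.ofReal (Real.pi^2*r*c''^2/16)
        = ENNReal.ofReal (Real.pi^2*r^2*c''^2/4) / ENNReal.ofReal 2 / ENNReal.ofReal (2*r) := by
          rw [← ENNReal.ofReal_div_of_pos (by norm_num : (0:ℝ) < 2),
            ← ENNReal.ofReal_div_of_pos (by positivity : (0:ℝ) < 2*r)]
          congr 1
          field_simp
          ring
      _ ≤ I₃ / ENNReal.ofReal 2 / ENNReal.ofReal (2*r) :=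
          ENNReal.div_le_div_right (ENNReal.div_le_div_right chain3 _) _
      _ = I₃ / 2 / ENNReal.ofReal (2*r) := by norm_num
  -- final step
  set l := -(a + x) with hldef
  have hlmem : l ∈ Ioo llo lhi := by
    constructor
    · rw [hldef]; linarith [hx.1, hx.2]
    · rw [hldef]; linarith [hx.1, hx.2]
  have htrans : ∫⁻ y in Ioo (-r) r, g2 (x,y) ^ (2:ℝ)
      = ∫⁻ ω in Ioo (b - r) (b + r),
          ((‖f (-(l:ℝ) + (ω:ℝ) * Complex.I)‖₊ : ℝ≥0∞)) ^ (2:ℝ) := by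
    have hmp := (measurePreserving_add_left volume b).setLIntegral_comp_emb
      (Homeomorph.measurableEmbedding (Homeomorph.addLeft b))
      (fun ω => ((‖f (-(l:ℝ) + (ω:ℝ) * Complex.I)‖₊ : ℝ≥0∞)) ^ (2:ℝ)) (Ioo (-r) r)
    have himg2 : (fun y => b + y) '' Ioo (-r) r = Ioo (b - r) (b + r) := by
      rw [Set.image_const_add_Ioo]
      congr 1 <;> ring
    rw [← himg2]
    rw [← hmp]
    apply setLIntegral_congr_fun measurableSet_Ioo
    intro y _
    have : (-(l:ℝ) : ℂ) + (↑(b + y)) * Complex.I = s₀ + (↑x + ↑y * Complex.I) := by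
      apply Complex.ext
      · simp [hldef, ha]
      · simp [hb]
    show g2 (x, y) ^ (2:ℝ) = _
    rw [hg2def]
    simp only [Homeomorph.addLeft, Equiv.addLeft, Homeomorph.homeomorph_mk_coe, Equiv.coe_fn_mk]
    rw [← this]
  have hline : (ENNReal.ofReal (1/(2*Real.pi)) *
      ∫⁻ ω : ℝ, ((‖f (-(l:ℝ) + (ω:ℝ) * Complex.I)‖₊ : ℝ≥0∞)) ^ (2:ℝ)) ^ (1/2:ℝ)
      ≤ H2Norm llo lhi f := by
    rw [H2Norm]
    exact le_iSup₂ (f := fun l' (_ : l' ∈ Ioo llo lhi) =>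
      (ENNReal.ofReal (1 / (2 * Real.pi)) *
        ∫⁻ ω : ℝ, ((‖f (-(l':ℝ) + (ω:ℝ) * Complex.I)‖₊ : ℝ≥0∞)) ^ (2 : ℝ)) ^ (1 / 2 : ℝ))
      l hlmem
  calc ENNReal.ofReal (Real.sqrt (Real.pi * r / 32) * c'')
      = (ENNReal.ofReal (Real.pi*r*c''^2/32)) ^ (1/2:ℝ) := by
        rw [ENNReal.ofReal_rpow_of_nonneg (by positivity) (by norm_num)]
        congr 1
        rw [← Real.sqrt_eq_rpow,
          show Real.pi*r*c''^2/32 = (Real.pi*r/32)*c''^2 by ring,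
          Real.sqrt_mul (by positivity), Real.sqrt_sq hpos.le]
    _ ≤ (ENNReal.ofReal (1/(2*Real.pi)) *
        ∫⁻ ω : ℝ, ((‖f (-(l:ℝ) + (ω:ℝ) * Complex.I)‖₊ : ℝ≥0∞)) ^ (2:ℝ)) ^ (1/2:ℝ) := by
        apply ENNReal.rpow_le_rpow _ (by norm_num)
        calc ENNReal.ofReal (Real.pi*r*c''^2/32)
            = ENNReal.ofReal (1/(2*Real.pi)) * ENNReal.ofReal (Real.pi^2*r*c''^2/16) := by
              rw [← ENNReal.ofReal_mul (by positivity)]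
              congr 1
              field_simp
              ring
          _ ≤ ENNReal.ofReal (1/(2*Real.pi)) *
              ∫⁻ ω : ℝ, ((‖f (-(l:ℝ) + (ω:ℝ) * Complex.I)‖₊ : ℝ≥0∞)) ^ (2:ℝ) := by
              apply mul_le_mul_right
              calc ENNReal.ofReal (Real.pi^2*r*c''^2/16)
                  ≤ I₃ / 2 / ENNReal.ofReal (2*r) := hT
                _ ≤ ∫⁻ y in Ioo (-r) r, g2 (x,y) ^ (2:ℝ) := hHx
                _ = ∫⁻ ω in Ioo (b - r) (b + r),
                    ((‖f (-(l:ℝ) + (ω:ℝ) * Complex.I)‖₊ : ℝ≥0∞)) ^ (2:ℝ) := htrans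
                _ ≤ ∫⁻ ω : ℝ, ((‖f (-(l:ℝ) + (ω:ℝ) * Complex.I)‖₊ : ℝ≥0∞)) ^ (2:ℝ) :=
                    setLIntegral_le_lintegral _ _
    _ ≤ H2Norm llo lhi f := hline


lemma rpow_two_real (t : ℝ) : t ^ (2:ℝ) = t^2 := by
  rw [show (2:ℝ) = ((2:ℕ):ℝ) by norm_num, Real.rpow_natCast]

lemma enorm_sq (x : ℂ) : ((‖x‖₊ : ℝ≥0∞)) ^ (2:ℝ) = ENNReal.ofReal (‖x‖^2) := by
  rw [← ofReal_norm_eq_coe_nnnorm,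
    ENNReal.ofReal_rpow_of_nonneg (norm_nonneg x) (by norm_num), rpow_two_real]

lemma H2Norm_le (llo lhi : ℝ) (f g : ℂ → ℂ) (C : ℝ) (hC : 0 ≤ C)
    (h : ∀ z ∈ strip llo lhi, ‖f z‖ ≤ C * ‖g z‖) :
    H2Norm llo lhi f ≤ ENNReal.ofReal C * H2Norm llo lhi g := by
  rw [H2Norm, H2Norm]
  apply iSup₂_le
  intro l hl
  have hmem : ∀ ω : ℝ, (-(l:ℝ) + (ω:ℝ) * Complex.I : ℂ) ∈ strip llo lhi := by
    intro ω
    constructor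
    · simp only [Complex.add_re, Complex.neg_re, Complex.ofReal_re, Complex.mul_re,
        Complex.I_re, Complex.I_im, Complex.ofReal_im]
      simp
      linarith [hl.2]
    · simp only [Complex.add_re, Complex.neg_re, Complex.ofReal_re]
      simp
      linarith [hl.1]
  have hpt : ∀ ω : ℝ, ((‖f (-(l:ℝ) + ω * Complex.I)‖₊ : ℝ≥0∞)) ^ (2:ℝ)
      ≤ (ENNReal.ofReal C)^(2:ℝ) * ((‖g (-(l:ℝ) + ω * Complex.I)‖₊ : ℝ≥0∞)) ^ (2:ℝ) := by
    intro ω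
    rw [← ENNReal.mul_rpow_of_nonneg _ _ (by norm_num : (0:ℝ) ≤ 2)]
    apply ENNReal.rpow_le_rpow _ (by norm_num)
    rw [← ofReal_norm_eq_coe_nnnorm, ← ofReal_norm_eq_coe_nnnorm, ← ENNReal.ofReal_mul hC]
    exact ENNReal.ofReal_le_ofReal (h _ (hmem ω))
  have hCtop : (ENNReal.ofReal C)^(2:ℝ) ≠ ⊤ :=
    ENNReal.rpow_ne_top_of_nonneg (by norm_num) ENNReal.ofReal_ne_top
  calc (ENNReal.ofReal (1/(2*Real.pi)) *
        ∫⁻ ω : ℝ, (‖f (-↑l + ↑ω * Complex.I)‖₊ : ℝ≥0∞) ^ (2:ℝ)) ^ (1/2:ℝ)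
      ≤ (ENNReal.ofReal (1/(2*Real.pi)) * ((ENNReal.ofReal C)^(2:ℝ) *
          ∫⁻ ω : ℝ, (‖g (-↑l + ↑ω * Complex.I)‖₊ : ℝ≥0∞) ^ (2:ℝ))) ^ (1/2:ℝ) := by
        apply ENNReal.rpow_le_rpow _ (by norm_num)
        apply mul_le_mul_right
        rw [← lintegral_const_mul' _ _ hCtop]
        exact lintegral_mono fun ω => hpt ω
    _ = ENNReal.ofReal C * (ENNReal.ofReal (1/(2*Real.pi)) *
          ∫⁻ ω : ℝ, (‖g (-↑l + ↑ω * Complex.I)‖₊ : ℝ≥0∞) ^ (2:ℝ)) ^ (1/2:ℝ) := by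
        rw [show ENNReal.ofReal (1/(2*Real.pi)) * ((ENNReal.ofReal C)^(2:ℝ) *
            (∫⁻ ω : ℝ, (‖g (-↑l + ↑ω * Complex.I)‖₊ : ℝ≥0∞) ^ (2:ℝ)))
          = (ENNReal.ofReal C)^(2:ℝ) * (ENNReal.ofReal (1/(2*Real.pi)) *
            ∫⁻ ω : ℝ, (‖g (-↑l + ↑ω * Complex.I)‖₊ : ℝ≥0∞) ^ (2:ℝ)) by ring,
          ENNReal.mul_rpow_of_nonneg _ _ (by norm_num : (0:ℝ) ≤ 1/2),
          ← ENNReal.rpow_mul]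
        norm_num
    _ ≤ ENNReal.ofReal C * ⨆ l' ∈ Ioo llo lhi, (ENNReal.ofReal (1/(2*Real.pi)) *
          ∫⁻ ω : ℝ, (‖g (-↑l' + ↑ω * Complex.I)‖₊ : ℝ≥0∞) ^ (2:ℝ)) ^ (1/2:ℝ) := by
        apply mul_le_mul_right
        exact le_iSup₂ (f := fun l' (_ : l' ∈ Ioo llo lhi) =>
          (ENNReal.ofReal (1/(2*Real.pi)) *
            ∫⁻ ω : ℝ, (‖g (-↑l' + ↑ω * Complex.I)‖₊ : ℝ≥0∞) ^ (2:ℝ)) ^ (1/2:ℝ)) l hl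

noncomputable def Vfun (s₀ : ℂ) : ℂ → ℂ := fun s => Complex.exp ((s - s₀)^2)

lemma Vfun_diff (s₀ : ℂ) : Differentiable ℂ (Vfun s₀) :=
  ((differentiable_id.sub (differentiable_const s₀)).pow 2).cexp

lemma Vfun_at (s₀ : ℂ) : Vfun s₀ s₀ = 1 := by simp [Vfun]

lemma Vfun_norm (s₀ z : ℂ) :
    ‖Vfun s₀ z‖ = Real.exp ((z.re - s₀.re)^2 - (z.im - s₀.im)^2) := by
  rw [Vfun, Complex.norm_exp]
  congr 1
  rw [sq, Complex.mul_re]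
  simp only [Complex.sub_re, Complex.sub_im]
  ring

lemma Vfun_fin (llo lhi : ℝ) (s₀ : ℂ) : H2Norm llo lhi (Vfun s₀) < ⊤ := by
  set B := max |llo| |lhi| + |s₀.re| with hB
  set Cg := ∫⁻ ω : ℝ, ENNReal.ofReal (Real.exp (-2 * (ω - s₀.im)^2)) with hCg
  have hCgfin : Cg < ⊤ := by
    have hint : Integrable (fun ω : ℝ => Real.exp (-2 * (ω - s₀.im)^2)) := by
      have h2 := integrable_exp_neg_mul_sq (by norm_num : (0:ℝ) < 2)
      exact h2.comp_sub_right s₀.im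
    have := hint.hasFiniteIntegral
    rw [HasFiniteIntegral] at this
    calc Cg = ∫⁻ ω : ℝ, ‖Real.exp (-2 * (ω - s₀.im)^2)‖ₑ := by
          apply lintegral_congr
          intro ω
          rw [Real.enorm_eq_ofReal (Real.exp_pos _).le]
      _ < ⊤ := this
  have hbound : ∀ l ∈ Ioo llo lhi,
      (ENNReal.ofReal (1 / (2 * Real.pi)) *
        ∫⁻ ω : ℝ, (‖Vfun s₀ (-l + ω * Complex.I)‖₊ : ℝ≥0∞) ^ (2 : ℝ)) ^ (1/2 : ℝ)
      ≤ (ENNReal.ofReal (1 / (2 * Real.pi)) *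
          (ENNReal.ofReal (Real.exp (2 * B^2)) * Cg)) ^ (1/2 : ℝ) := by
    intro l hl
    apply ENNReal.rpow_le_rpow _ (by norm_num)
    apply mul_le_mul_right
    have hptw : ∀ ω : ℝ, (‖Vfun s₀ (-l + ω * Complex.I)‖₊ : ℝ≥0∞) ^ (2 : ℝ)
        ≤ ENNReal.ofReal (Real.exp (2 * B^2)) *
          ENNReal.ofReal (Real.exp (-2 * (ω - s₀.im)^2)) := by
      intro ω
      rw [enorm_sq, Vfun_norm, ← ENNReal.ofReal_mul (Real.exp_pos _).le]
      apply ENNReal.ofReal_le_ofReal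
      rw [← Real.exp_nat_mul, ← Real.exp_add]
      apply Real.exp_le_exp.2
      have him : (-(l:ℂ) + (ω:ℂ) * Complex.I).im = ω := by simp
      have hre : (-(l:ℂ) + (ω:ℂ) * Complex.I).re = -l := by simp
      rw [him, hre]
      have hlB : (-l - s₀.re)^2 ≤ B^2 := by
        have h1 : |l| ≤ max |llo| |lhi| := by
          rw [abs_le]
          constructor
          · calc -(max |llo| |lhi|) ≤ -|llo| := by simp
              _ ≤ llo := neg_abs_le llo
              _ ≤ l := hl.1.le
          · calc l ≤ lhi := hl.2.le
              _ ≤ |lhi| := le_abs_self lhi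
              _ ≤ max |llo| |lhi| := le_max_right _ _
        have h2 : |(-l - s₀.re)| ≤ B := by
          calc |(-l - s₀.re)| ≤ |l| + |s₀.re| := by
                rw [show -l - s₀.re = -(l + s₀.re) by ring, abs_neg]
                exact (abs_add_le _ _)
            _ ≤ B := by rw [hB]; linarith
        have h3 := abs_le.1 h2
        nlinarith [h3.1, h3.2]
      push_cast
      linarith [hlB]
    calc ∫⁻ ω : ℝ, (‖Vfun s₀ (-l + ω * Complex.I)‖₊ : ℝ≥0∞) ^ (2 : ℝ)
        ≤ ∫⁻ ω : ℝ, ENNReal.ofReal (Real.exp (2 * B^2)) *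
            ENNReal.ofReal (Real.exp (-2 * (ω - s₀.im)^2)) := lintegral_mono hptw
      _ = ENNReal.ofReal (Real.exp (2 * B^2)) * Cg := by
          rw [lintegral_const_mul' _ _ ENNReal.ofReal_ne_top, hCg]
  have hfin : (ENNReal.ofReal (1 / (2 * Real.pi)) *
      (ENNReal.ofReal (Real.exp (2 * B^2)) * Cg)) ^ (1/2 : ℝ) < ⊤ := by
    apply ENNReal.rpow_lt_top_of_nonneg (by norm_num)
    exact (ENNReal.mul_lt_top ENNReal.ofReal_lt_top
      (ENNReal.mul_lt_top ENNReal.ofReal_lt_top hCgfin)).ne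
  calc H2Norm llo lhi (Vfun s₀) ≤ (ENNReal.ofReal (1 / (2 * Real.pi)) *
      (ENNReal.ofReal (Real.exp (2 * B^2)) * Cg)) ^ (1/2 : ℝ) := by
        rw [H2Norm]; exact iSup₂_le hbound
    _ < ⊤ := hfin


/-- Sharpness of the norm of the multiplication operator `M_G` on `H₂` of a strip
(lower bound half of Theorem 4 of the paper): for every `c` below the sup norm of `G`
there is `U ∈ H₂` with `‖G U‖₂ > c ‖U‖₂`. -/
theorem multiplication_operator_norm_sharp (llo lhi : ℝ) (hl : llo < lhi)
    (G : ℂ → ℂ)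
    (hG_an : DifferentiableOn ℂ G (strip llo lhi))
    (hG_bdd : ∃ M : ℝ, ∀ s ∈ strip llo lhi, ‖G s‖ ≤ M)
    (c : ℝ) (hc : c < ⨆ s ∈ strip llo lhi, ‖G s‖) :
    ∃ U : ℂ → ℂ, DifferentiableOn ℂ U (strip llo lhi) ∧
      0 < H2Norm llo lhi U ∧ H2Norm llo lhi U < ⊤ ∧
      c * (H2Norm llo lhi U).toReal <
        (H2Norm llo lhi (fun s => G s * U s)).toReal := by
  by_contra hcontra
  push_neg at hcontra
  obtain ⟨M, hM⟩ := hG_bdd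
  set M₁ := max M 1 with hM₁def
  have hM₁G : ∀ s ∈ strip llo lhi, ‖G s‖ ≤ M₁ := fun s hs => (hM s hs).trans (le_max_left _ _)
  have hM₁0 : (0:ℝ) ≤ M₁ := le_trans zero_le_one (le_max_right _ _)
  have hsetup : ∀ s₀ ∈ strip llo lhi, ∃ r : ℝ, 0 < r ∧ llo < -s₀.re - r ∧ -s₀.re + r < lhi := by
    intro s₀ hs
    obtain ⟨hs1, hs2⟩ := hs
    have hA : (0:ℝ) < -s₀.re - llo := by linarith
    have hB : (0:ℝ) < lhi + s₀.re := by linarith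
    have hmin1 : min (-s₀.re - llo) (lhi + s₀.re) ≤ -s₀.re - llo := min_le_left _ _
    have hmin2 : min (-s₀.re - llo) (lhi + s₀.re) ≤ lhi + s₀.re := min_le_right _ _
    have hminpos : 0 < min (-s₀.re - llo) (lhi + s₀.re) := lt_min hA hB
    exact ⟨min (-s₀.re - llo) (lhi + s₀.re) / 2, by linarith, by linarith, by linarith⟩
  rcases lt_or_ge c 0 with hc0 | hc0
  -- trivial case c < 0
  · set s₀ : ℂ := ((-(llo+lhi)/2 : ℝ) : ℂ) with hs₀def
    have hs₀mem : s₀ ∈ strip llo lhi := by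
      constructor <;> simp [hs₀def] <;> linarith
    obtain ⟨r, hr, h1, h2⟩ := hsetup s₀ hs₀mem
    have hVd : DifferentiableOn ℂ (Vfun s₀) (strip llo lhi) :=
      (Vfun_diff s₀).differentiableOn
    have hlowV := H2Norm_lower llo lhi (Vfun s₀) hVd s₀ r hr h1 h2
    rw [Vfun_at, norm_one, mul_one] at hlowV
    have hKpos : (0:ℝ) < Real.sqrt (Real.pi * r / 32) := Real.sqrt_pos.2 (by positivity)
    have hVpos : 0 < H2Norm llo lhi (Vfun s₀) :=
      lt_of_lt_of_le (ENNReal.ofReal_pos.2 hKpos) hlowV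
    have hVfin := Vfun_fin llo lhi s₀
    have happ := hcontra (Vfun s₀) hVd hVpos hVfin
    have hTpos : 0 < (H2Norm llo lhi (Vfun s₀)).toReal :=
      ENNReal.toReal_pos hVpos.ne' hVfin.ne
    have : (0:ℝ) ≤ (H2Norm llo lhi (fun s => G s * Vfun s₀ s)).toReal := ENNReal.toReal_nonneg
    nlinarith
  -- main case 0 ≤ c
  · obtain ⟨s₀, hs₀mem, hs₀⟩ : ∃ s₀ ∈ strip llo lhi, c < ‖G s₀‖ := by
      by_contra hno
      push_neg at hno
      have hle : (⨆ s ∈ strip llo lhi, ‖G s‖) ≤ c :=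
        Real.iSup_le (fun s => Real.iSup_le (fun hs => hno s hs) hc0) hc0
      exact absurd hc (not_lt.2 hle)
    obtain ⟨r, hr, h1, h2⟩ := hsetup s₀ hs₀mem
    set c' := ‖G s₀‖ with hc'def
    have hc'pos : 0 < c' := lt_of_le_of_lt hc0 hs₀
    set K := Real.sqrt (Real.pi * r / 32) with hKdef
    have hKpos : (0:ℝ) < K := Real.sqrt_pos.2 (by positivity)
    have hVd : DifferentiableOn ℂ (Vfun s₀) (strip llo lhi) :=
      (Vfun_diff s₀).differentiableOn
    have hVfin := Vfun_fin llo lhi s₀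
    set T := (H2Norm llo lhi (Vfun s₀)).toReal with hTdef
    -- the family of test functions
    set F : ℕ → ℂ → ℂ := fun n s => G s ^ n * Vfun s₀ s with hFdef
    have hFdiff : ∀ n, DifferentiableOn ℂ (F n) (strip llo lhi) :=
      fun n => (hG_an.pow n).mul hVd
    have hFat : ∀ n, ‖F n s₀‖ = c' ^ n := by
      intro n
      rw [hFdef]
      simp only [norm_mul, norm_pow, Vfun_at, norm_one, mul_one, hc'def]
    have hFlow : ∀ n, ENNReal.ofReal (K * c' ^ n) ≤ H2Norm llo lhi (F n) := by
      intro n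
      have := H2Norm_lower llo lhi (F n) (hFdiff n) s₀ r hr h1 h2
      rwa [hFat n] at this
    have hFup : ∀ n, H2Norm llo lhi (F n) ≤ ENNReal.ofReal (M₁ ^ n) * H2Norm llo lhi (Vfun s₀) := by
      intro n
      apply H2Norm_le llo lhi (F n) (Vfun s₀) (M₁ ^ n) (pow_nonneg hM₁0 n)
      intro z hz
      rw [hFdef]
      simp only [norm_mul, norm_pow]
      apply mul_le_mul_of_nonneg_right _ (norm_nonneg _)
      exact pow_le_pow_left₀ (norm_nonneg _) (hM₁G z hz) n
    have hFfin : ∀ n, H2Norm llo lhi (F n) < ⊤ := by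
      intro n
      apply lt_of_le_of_lt (hFup n)
      exact ENNReal.mul_lt_top ENNReal.ofReal_lt_top hVfin
    have hFpos : ∀ n, 0 < H2Norm llo lhi (F n) := by
      intro n
      apply lt_of_lt_of_le _ (hFlow n)
      exact ENNReal.ofReal_pos.2 (by positivity)
    have hFtoReal : ∀ n, K * c' ^ n ≤ (H2Norm llo lhi (F n)).toReal := by
      intro n
      have := ENNReal.toReal_mono (hFfin n).ne (hFlow n)
      rwa [ENNReal.toReal_ofReal (by positivity)] at this
    have hTpos : 0 < T := by
      have := hFtoReal 0
      simp only [pow_zero, mul_one] at this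
      have hF0 : F 0 = Vfun s₀ := by
        funext s
        rw [hFdef]
        simp
      rw [hF0] at this
      rw [hTdef]
      linarith
    -- induction
    have hind : ∀ n, (H2Norm llo lhi (F n)).toReal ≤ c ^ n * T := by
      intro n
      induction n with
      | zero =>
        have hF0 : F 0 = Vfun s₀ := by
          funext s
          rw [hFdef]
          simp
        rw [hF0, pow_zero, one_mul, hTdef]
      | succ n ih =>
        have happ := hcontra (F n) (hFdiff n) (hFpos n) (hFfin n)
        have heq : (fun s => G s * F n s) = F (n+1) := by
          funext s
          rw [hFdef]
          ring
        rw [heq] at happ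
        calc (H2Norm llo lhi (F (n+1))).toReal ≤ c * (H2Norm llo lhi (F n)).toReal := happ
          _ ≤ c * (c ^ n * T) := mul_le_mul_of_nonneg_left ih hc0
          _ = c ^ (n+1) * T := by ring
    -- contradiction
    have hratio : c / c' < 1 := (div_lt_one hc'pos).2 hs₀
    obtain ⟨n, hn⟩ := exists_pow_lt_of_lt_one (div_pos hKpos hTpos) hratio
    have hfinal : K * c' ^ n ≤ c ^ n * T := (hFtoReal n).trans (hind n)
    have hcn : c ^ n * T < K * c' ^ n := by
      have h1' : c ^ n = (c / c') ^ n * c' ^ n := by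
        rw [div_pow, div_mul_cancel₀]
        exact pow_ne_zero n hc'pos.ne'
      rw [h1']
      calc (c / c') ^ n * c' ^ n * T < K / T * c' ^ n * T := by
            apply mul_lt_mul_of_pos_right _ hTpos
            exact mul_lt_mul_of_pos_right hn (pow_pos hc'pos n)
        _ = K * c' ^ n := by field_simp
    linarith
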